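/- (Lemma 3.2) Let n ≥ 1 and let v, v' : Fin (n+1) → ℝⁿ be points with v(i) ≠ v(0) and v'(i) ≠ v'(0) for all i ≠ 0. Suppose u : Fin (n+1) → ℝ satisfies dist(v'(i), v'(j)) = exp((u(i)+u(j))/2)·dist(v(i), v(j)) for all i ≠ j. Define w(i) = inv_{v(0),1}(v(i)) and w'(i) = inv_{v'(0),1}(v'(i)) for i ≠ 0. Then for all i, j ≠ 0, dist(w'(i), w'(j)) = exp(−u(0))·dist(w(i), w(j)). -/
import Mathlib

/-- Inversion in the sphere of center `p` and radius `R`. -/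
noncomputable def sphInv {n : ℕ} (p : EuclideanSpace ℝ (Fin n)) (R : ℝ)
    (x : EuclideanSpace ℝ (Fin n)) : EuclideanSpace ℝ (Fin n) :=
  p + (R ^ 2 / (dist x p) ^ 2) • (x - p)

lemma sphInv_eq_inversion {n : ℕ} (p : EuclideanSpace ℝ (Fin n)) (R : ℝ)
    (x : EuclideanSpace ℝ (Fin n)) : sphInv p R x = EuclideanGeometry.inversion p R x := by
  simp only [sphInv, EuclideanGeometry.inversion, div_pow, vsub_eq_sub, vadd_eq_add]
  ring_nf
  abel

/-- Lemma 3.2: if the vertex tuples `v` and `v'` are discretely conformally related with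
scale factors `e^u`, then inverting in the unit spheres centered at `v 0` and `v' 0`
produces configurations `w`, `w'` that are similar with ratio `e^{-u 0}`. -/
theorem inverted_configurations_similar {n : ℕ} (hn : 1 ≤ n)
    (v v' : Fin (n + 1) → EuclideanSpace ℝ (Fin n))
    (hv : ∀ i, i ≠ 0 → v i ≠ v 0) (hv' : ∀ i, i ≠ 0 → v' i ≠ v' 0)
    (u : Fin (n + 1) → ℝ)
    (h : ∀ i j, i ≠ j → dist (v' i) (v' j) = Real.exp ((u i + u j) / 2) * dist (v i) (v j)) :
    ∀ i j, i ≠ 0 → j ≠ 0 →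
      dist (sphInv (v' 0) 1 (v' i)) (sphInv (v' 0) 1 (v' j)) =
        Real.exp (-(u 0)) * dist (sphInv (v 0) 1 (v i)) (sphInv (v 0) 1 (v j)) := by
  intro i j hi hj
  rcases eq_or_ne i j with rfl | hij
  · simp
  rw [sphInv_eq_inversion, sphInv_eq_inversion, sphInv_eq_inversion, sphInv_eq_inversion,
    EuclideanGeometry.dist_inversion_inversion (hv' i hi) (hv' j hj),
    EuclideanGeometry.dist_inversion_inversion (hv i hi) (hv j hj),
    h i j hij, h i 0 hi, h j 0 hj]
  have d1 : dist (v i) (v 0) ≠ 0 := dist_ne_zero.2 (hv i hi)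
  have d2 : dist (v j) (v 0) ≠ 0 := dist_ne_zero.2 (hv j hj)
  have e1 := Real.exp_ne_zero ((u i + u 0) / 2)
  have e2 := Real.exp_ne_zero ((u j + u 0) / 2)
  field_simp
  have key : Real.exp (-u 0) * (Real.exp ((u i + u 0) / 2) * Real.exp ((u j + u 0) / 2)) =
      Real.exp ((u i + u j) / 2) := by
    rw [← Real.exp_add, ← Real.exp_add]; ring_nf
  rw [← key]; ring
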